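/- arXiv:1406.4384 — 6 statements merged into one kernel-verified Lean document; each statement's English description precedes it below -/
import Mathlib

section
/- Let f : X → C be a colouring with C finite and let β = (⟨f_α⟩_α, ⟨g_α⟩_α) be a lifted colour that is in the range of the lifted colouring F : P(X) → 2^C × 2^C. Then β is achieved by exactly one subset of X if and only if for every colour α with f⁻¹{α} nonempty, f_α = false or g_α = false. -/
/-- The lifted colouring: `A ⊆ X` is sent to the pair recording, for each colour `α`,
whether `A` contains an element of colour `α` and whether `X \ A` does. -/
def Lift {X C : Type*} (f : X → C) (A : Set X) : (C → Prop) × (C → Prop) :=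
  (fun α => ∃ x ∈ A, f x = α, fun α => ∃ x ∈ Aᶜ, f x = α)

/-- A lifted colour `β` in the range of the lifted colouring is achieved by exactly one
subset of `X` iff for every colour `α` with nonempty fibre, one of the two components
of `β` at `α` is false. -/
theorem stmt9 {X C : Type*} [Finite C] (f : X → C) (β : (C → Prop) × (C → Prop))
    (hβ : ∃ A : Set X, Lift f A = β) :
    (∃! A : Set X, Lift f A = β) ↔
      ∀ α : C, (f ⁻¹' {α}).Nonempty → (¬ β.1 α ∨ ¬ β.2 α) := by
  obtain ⟨A, hA⟩ := hβ
  constructor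
  · rintro ⟨A₀, hA₀, huniq⟩ α _
    by_contra h
    push_neg at h
    obtain ⟨h1, h2⟩ := h
    rw [← hA₀] at h1 h2
    obtain ⟨a, ha, hfa⟩ := h1
    obtain ⟨b, hb, hfb⟩ := h2
    have hab : a ≠ b := fun h => hb (h ▸ ha)
    have hne : (insert b (A₀ \ {a})) ≠ A₀ := fun h => hb (h ▸ Set.mem_insert _ _)
    apply hne
    apply huniq
    rw [← hA₀]
    unfold Lift
    refine Prod.ext ?_ ?_ <;> funext γ <;> apply propext <;> constructor
    · rintro ⟨z, hz, rfl⟩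
      rcases hz with rfl | hz
      · exact ⟨a, ha, hfb ▸ hfa⟩
      · exact ⟨z, hz.1, rfl⟩
    · rintro ⟨z, hz, rfl⟩
      by_cases hza : z = a
      · exact ⟨b, Set.mem_insert _ _, hza ▸ (hfb.trans hfa.symm)⟩
      · exact ⟨z, Set.mem_insert_of_mem _ ⟨hz, hza⟩, rfl⟩
    · rintro ⟨z, hz, rfl⟩
      by_cases hza : z = a
      · subst hza
        exact ⟨b, hb, hfb.trans hfa.symm⟩
      · exact ⟨z, fun hzA => hz (Set.mem_insert_of_mem _ ⟨hzA, hza⟩), rfl⟩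
    · rintro ⟨z, hz, rfl⟩
      by_cases hzb : z = b
      · subst hzb
        refine ⟨a, ?_, hfa.trans hfb.symm⟩
        rintro (rfl | h)
        · exact hab rfl
        · exact h.2 rfl
      · refine ⟨z, ?_, rfl⟩
        rintro (rfl | h)
        · exact hzb rfl
        · exact hz h.1
  · intro h
    refine ⟨A, hA, fun B hB => ?_⟩
    have key : ∀ (S : Set X), Lift f S = β → S = f ⁻¹' {α | β.1 α} := by
      intro S hS
      ext x
      simp only [Set.mem_preimage, Set.mem_setOf_eq]
      constructor
      · intro hx; rw [← hS]; exact ⟨x, hx, rfl⟩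
      · intro hx
        by_contra hxc
        have h2 : β.2 (f x) := by rw [← hS]; exact ⟨x, hxc, rfl⟩
        rcases h (f x) ⟨x, rfl⟩ with h' | h'
        · exact h' hx
        · exact h' h2
    rw [key B hB, key A hA]
end

section
/- Let f : X → C be a colouring with C finite, and let β = (⟨f_α⟩, ⟨g_α⟩) be a lifted colour in the range of the lifted colouring F : P(X) → 2^C × 2^C. If there exists a colour α with |f⁻¹{α}| ≥ N and f_α = g_α = true, then at least N distinct subsets of X receive lifted colour β. -/
open Classical in
noncomputable def tog {X : Type*} (A : Set X) (a b x : X) : Set X :=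
  if x = a then A else if x ∈ A then (A \ {x}) ∪ {b} else (A \ {a}) ∪ {x}

lemma lift_eq_iff {X C : Type*} (f : X → C) (A B : Set X) :
    Lift f B = Lift f A ↔
      (∀ γ, (∃ y ∈ B, f y = γ) ↔ (∃ y ∈ A, f y = γ)) ∧
      (∀ γ, (∃ y ∈ Bᶜ, f y = γ) ↔ (∃ y ∈ Aᶜ, f y = γ)) := by
  simp [Lift, Prod.ext_iff, funext_iff, eq_iff_iff]

lemma lift_tog {X C : Type*} (f : X → C) (A : Set X) {α : C} {a b x : X}
    (ha : a ∈ A) (hfa : f a = α) (hb : b ∉ A) (hfb : f b = α) (hx : f x = α) :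
    Lift f (tog A a b x) = Lift f A := by
  classical
  rw [lift_eq_iff]
  unfold tog
  split_ifs with h1 h2
  · simp
  · constructor
    · intro γ
      by_cases hγ : γ = α
      · subst hγ
        exact ⟨fun _ => ⟨a, ha, hfa⟩, fun _ => ⟨b, Or.inr rfl, hfb⟩⟩
      · constructor
        · rintro ⟨y, (hy | hy), hyγ⟩
          · exact ⟨y, hy.1, hyγ⟩
          · exact absurd hyγ (by simp_all)
        · rintro ⟨y, hy, hyγ⟩
          refine ⟨y, Or.inl ⟨hy, ?_⟩, hyγ⟩
          rintro rfl; exact hγ (hyγ ▸ hx ▸ rfl) -- y = x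
    · intro γ
      by_cases hγ : γ = α
      · subst hγ
        refine ⟨fun _ => ⟨b, hb, hfb⟩, fun _ => ⟨x, ?_, hx⟩⟩
        simp only [Set.mem_compl_iff, Set.mem_union, Set.mem_diff, Set.mem_singleton_iff]
        push_neg
        refine ⟨fun _ => by trivial, fun hxb => hb (hxb ▸ h2)⟩
      · constructor
        · rintro ⟨y, hy, hyγ⟩
          simp only [Set.mem_compl_iff, Set.mem_union, Set.mem_diff, Set.mem_singleton_iff] at hy
          push_neg at hy
          refine ⟨y, fun hyA => ?_, hyγ⟩
          have := hy.1 hyA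
          exact hγ (hyγ ▸ this ▸ hx ▸ rfl)
        · rintro ⟨y, hy, hyγ⟩
          refine ⟨y, ?_, hyγ⟩
          simp only [Set.mem_compl_iff, Set.mem_union, Set.mem_diff, Set.mem_singleton_iff]
          push_neg
          refine ⟨fun hyA => absurd hyA hy, fun hyb => hγ (hyγ ▸ hyb ▸ hfb)⟩
  · constructor
    · intro γ
      by_cases hγ : γ = α
      · subst hγ
        exact ⟨fun _ => ⟨a, ha, hfa⟩, fun _ => ⟨x, Or.inr rfl, hx⟩⟩
      · constructor
        · rintro ⟨y, (hy | hy), hyγ⟩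
          · exact ⟨y, hy.1, hyγ⟩
          · exact absurd hyγ (by simp_all)
        · rintro ⟨y, hy, hyγ⟩
          refine ⟨y, Or.inl ⟨hy, ?_⟩, hyγ⟩
          rintro rfl; exact hγ (hyγ ▸ hfa)
    · intro γ
      by_cases hγ : γ = α
      · subst hγ
        refine ⟨fun _ => ⟨b, hb, hfb⟩, fun _ => ⟨a, ?_, hfa⟩⟩
        simp only [Set.mem_compl_iff, Set.mem_union, Set.mem_diff, Set.mem_singleton_iff]
        push_neg
        refine ⟨fun _ => by trivial, fun hax => h2 (hax ▸ ha)⟩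
      · constructor
        · rintro ⟨y, hy, hyγ⟩
          simp only [Set.mem_compl_iff, Set.mem_union, Set.mem_diff, Set.mem_singleton_iff] at hy
          push_neg at hy
          refine ⟨y, fun hyA => ?_, hyγ⟩
          have := hy.1 hyA
          exact hγ (hyγ ▸ this ▸ hfa)
        · rintro ⟨y, hy, hyγ⟩
          refine ⟨y, ?_, hyγ⟩
          simp only [Set.mem_compl_iff, Set.mem_union, Set.mem_diff, Set.mem_singleton_iff]
          push_neg
          exact ⟨fun hyA => absurd hyA hy, fun hyx => hγ (hyγ ▸ hyx ▸ hx)⟩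

lemma tog_inj {X C : Type*} (f : X → C) (A : Set X) {α : C} {a b x y : X}
    (ha : a ∈ A) (hfa : f a = α) (hb : b ∉ A)
    (heq : tog A a b x = tog A a b y) (hx : f x = α) (hy : f y = α) : x = y := by
  classical
  unfold tog at heq
  by_cases h1 : x = a <;> by_cases h2 : y = a
  · exact h1.trans h2.symm
  · rw [if_pos h1, if_neg h2] at heq
    by_cases h3 : y ∈ A
    · rw [if_pos h3] at heq
      exact absurd (show b ∈ A by rw [heq]; exact Or.inr rfl) hb
    · rw [if_neg h3] at heq
      have : a ∈ (A \ {a}) ∪ {y} := by rw [← heq]; exact ha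
      rcases this with h | h
      · exact absurd rfl h.2
      · exact absurd (h ▸ ha) h3
  · rw [if_neg h1, if_pos h2] at heq
    by_cases h3 : x ∈ A
    · rw [if_pos h3] at heq
      exact absurd (show b ∈ A by rw [← heq]; exact Or.inr rfl) hb
    · rw [if_neg h3] at heq
      have : a ∈ (A \ {a}) ∪ {x} := by rw [heq]; exact ha
      rcases this with h | h
      · exact absurd rfl h.2
      · exact absurd (h ▸ ha) h3
  · rw [if_neg h1, if_neg h2] at heq
    by_cases h3 : x ∈ A <;> by_cases h4 : y ∈ A
    · rw [if_pos h3, if_pos h4] at heq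
      by_contra hxy
      have : y ∈ (A \ {x}) ∪ {b} := Or.inl ⟨h4, fun h => hxy h.symm⟩
      rw [heq] at this
      rcases this with h | h
      · exact h.2 rfl
      · exact hb (h ▸ h4)
    · rw [if_pos h3, if_neg h4] at heq
      have : a ∈ (A \ {x}) ∪ {b} := Or.inl ⟨ha, fun h => h1 h.symm⟩
      rw [heq] at this
      rcases this with h | h
      · exact absurd rfl h.2
      · exact absurd (h ▸ ha) h4
    · rw [if_neg h3, if_pos h4] at heq
      have : a ∈ (A \ {y}) ∪ {b} := Or.inl ⟨ha, fun h => h2 h.symm⟩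
      rw [← heq] at this
      rcases this with h | h
      · exact absurd rfl h.2
      · exact absurd (h ▸ ha) h3
    · rw [if_neg h3, if_neg h4] at heq
      have : x ∈ (A \ {a}) ∪ {y} := by rw [← heq]; exact Or.inr rfl
      rcases this with h | h
      · exact absurd h.1 h3
      · exact h


/-- If a lifted colour `β` is in the range of the lifted colouring and some colour `α`
has fibre of size at least `N` with both components of `β` at `α` true, then at least
`N` distinct subsets of `X` receive the lifted colour `β`. -/
theorem stmt10 {X C : Type*} [Finite C] (f : X → C) (N : ℕ)
    (β : (C → Prop) × (C → Prop)) (hβ : ∃ A : Set X, Lift f A = β)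
    (h : ∃ α : C, (N : Cardinal) ≤ Cardinal.mk (f ⁻¹' {α}) ∧ β.1 α ∧ β.2 α) :
    (N : Cardinal) ≤ Cardinal.mk {A : Set X // Lift f A = β} := by
  obtain ⟨A, rfl⟩ := hβ
  obtain ⟨α, hN, ⟨a, ha, hfa⟩, ⟨b, hb, hfb⟩⟩ := h
  refine hN.trans (Cardinal.mk_le_of_injective (f := fun x : f ⁻¹' {α} =>
    (⟨tog A a b x, lift_tog f A ha hfa hb hfb x.2⟩ : {B : Set X // Lift f B = Lift f A})) ?_)
  rintro ⟨x, hx⟩ ⟨y, hy⟩ heq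
  simp only [Subtype.mk.injEq] at heq ⊢
  exact tog_inj f A ha hfa hb heq hx hy
end

section
/- Let f : X → C and g : Y → C be colourings into a finite colour set C that are N-similar for some N ≥ 2, and let F : P(X) → 2^C × 2^C and G : P(Y) → 2^C × 2^C be the respective lifted colourings. Then F and G are N-similar. -/
/-- A colour `α` is `m`-special w.r.t. `f` if the fibre `f⁻¹{α}` has exactly `m` elements. -/
def IsSpecial {X C : Type*} (f : X → C) (α : C) (m : ℕ) : Prop :=
  (f ⁻¹' {α}).Finite ∧ (f ⁻¹' {α}).ncard = m

/-- Colourings `f` and `g` are `J`-similar if for all `m < J` and all colours `α`,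
`α` is `m`-special w.r.t. `f` iff it is `m`-special w.r.t. `g`. -/
def JSimilar {X Y C : Type*} (f : X → C) (g : Y → C) (J : ℕ) : Prop :=
  ∀ m < J, ∀ α : C, IsSpecial f α m ↔ IsSpecial g α m

open Set

namespace Stmt11Aux

variable {X Y C : Type*}

/-- The set of allowed intersections with a fibre `F`. -/
def Ch (F : Set X) (p q : Prop) : Set (Set X) :=
  {S | S ⊆ F ∧ (p ↔ S.Nonempty) ∧ (q ↔ (F \ S).Nonempty)}

lemma mem_lift_iff (f : X → C) (P : (C → Prop) × (C → Prop)) (A : Set X) :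
    Lift f A = P ↔
      ∀ α, (P.1 α ↔ (A ∩ f ⁻¹' {α}).Nonempty) ∧ (P.2 α ↔ ((f ⁻¹' {α}) \ A).Nonempty) := by
  obtain ⟨p, q⟩ := P
  simp only [Lift, Prod.mk.injEq, funext_iff, eq_iff_iff]
  constructor
  · rintro ⟨h1, h2⟩ α
    refine ⟨?_, ?_⟩
    · rw [← h1 α]
      exact ⟨fun ⟨x, hx, hfx⟩ => ⟨x, hx, hfx⟩, fun ⟨x, hx, hfx⟩ => ⟨x, hx, hfx⟩⟩
    · rw [← h2 α]
      exact ⟨fun ⟨x, hx, hfx⟩ => ⟨x, hfx, hx⟩, fun ⟨x, hfx, hx⟩ => ⟨x, hx, hfx⟩⟩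
  · intro h
    refine ⟨fun α => ?_, fun α => ?_⟩
    · rw [(h α).1]
      exact ⟨fun ⟨x, hx, hfx⟩ => ⟨x, hx, hfx⟩, fun ⟨x, hx, hfx⟩ => ⟨x, hx, hfx⟩⟩
    · rw [(h α).2]
      exact ⟨fun ⟨x, hfx, hx⟩ => ⟨x, hx, hfx⟩, fun ⟨x, hx, hfx⟩ => ⟨x, hfx, hx⟩⟩

/-- The fibre of the lifted colouring decomposes as a product of choices over colours. -/
noncomputable def fibEquiv (f : X → C) (P : (C → Prop) × (C → Prop)) :
    ↥(Lift f ⁻¹' {P}) ≃ ∀ α : C, ↥(Ch (f ⁻¹' {α}) (P.1 α) (P.2 α)) where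
  toFun A α := ⟨A.1 ∩ f ⁻¹' {α}, by
    have h := (mem_lift_iff f P A.1).mp A.2 α
    refine ⟨inter_subset_right, h.1, ?_⟩
    rw [Set.diff_inter_self_eq_diff]
    exact h.2⟩
  invFun s := ⟨⋃ α, (s α).1, by
    rw [Set.mem_preimage, Set.mem_singleton_iff, mem_lift_iff]
    intro α
    have h1 : (⋃ β, (s β).1) ∩ f ⁻¹' {α} = (s α).1 := by
      ext x
      constructor
      · rintro ⟨hx, hfx⟩
        obtain ⟨-, ⟨β, rfl⟩, hxβ⟩ := hx
        have hβ : f x = β := (s β).2.1 hxβ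
        rw [Set.mem_preimage, Set.mem_singleton_iff] at hfx
        have : β = α := hβ.symm.trans hfx
        exact this ▸ hxβ
      · intro hx
        exact ⟨Set.mem_iUnion.mpr ⟨α, hx⟩, (s α).2.1 hx⟩
    have h2 : (f ⁻¹' {α}) \ (⋃ β, (s β).1) = (f ⁻¹' {α}) \ (s α).1 := by
      ext x
      simp only [Set.mem_diff, Set.mem_iUnion, not_exists]
      constructor
      · rintro ⟨hfx, hn⟩
        exact ⟨hfx, hn α⟩
      · rintro ⟨hfx, hn⟩
        refine ⟨hfx, fun β hxβ => ?_⟩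
        have hβ : f x = β := (s β).2.1 hxβ
        rw [Set.mem_preimage, Set.mem_singleton_iff] at hfx
        have hβα : β = α := hβ.symm.trans hfx
        exact hn (hβα ▸ hxβ)
    rw [h1, h2]
    exact ⟨(s α).2.2.1, (s α).2.2.2⟩⟩
  left_inv A := by
    apply Subtype.ext
    ext x
    simp only [Set.mem_iUnion, Set.mem_inter_iff, Set.mem_preimage, Set.mem_singleton_iff]
    exact ⟨fun ⟨α, hx, _⟩ => hx, fun hx => ⟨f x, hx, rfl⟩⟩
  right_inv s := by
    funext α
    apply Subtype.ext
    show (⋃ β, (s β).1) ∩ f ⁻¹' {α} = (s α).1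
    ext x
    constructor
    · rintro ⟨hx, hfx⟩
      obtain ⟨-, ⟨β, rfl⟩, hxβ⟩ := hx
      have hβ : f x = β := (s β).2.1 hxβ
      rw [Set.mem_preimage, Set.mem_singleton_iff] at hfx
      have hβα : β = α := hβ.symm.trans hfx
      exact hβα ▸ hxβ
    · intro hx
      exact ⟨Set.mem_iUnion.mpr ⟨α, hx⟩, (s α).2.1 hx⟩

lemma two_le_iff {F : Set X} :
    (∃ a ∈ F, ∃ b ∈ F, a ≠ b) ↔ F.Nonempty ∧ ¬(F.Finite ∧ F.ncard = 1) := by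
  constructor
  · rintro ⟨a, ha, b, hb, hab⟩
    refine ⟨⟨a, ha⟩, fun ⟨hfin, h1⟩ => ?_⟩
    obtain ⟨c, hc⟩ := (Set.ncard_eq_one).mp h1
    rw [hc] at ha hb
    exact hab (ha.trans hb.symm)
  · rintro ⟨⟨a, ha⟩, h⟩
    by_contra hc
    push_neg at hc
    have hFa : F = {a} := by
      apply Set.eq_singleton_iff_unique_mem.mpr
      exact ⟨ha, fun b hb => (hc a ha b hb).symm⟩
    exact h ⟨hFa ▸ Set.finite_singleton a, hFa ▸ Set.ncard_singleton a⟩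

lemma ch_nonempty_iff {F : Set X} {p q : Prop} :
    (Ch F p q).Nonempty ↔
      ((p ∨ q) → F.Nonempty) ∧ ((¬p ∧ ¬q) → F = ∅) ∧
        ((p ∧ q) → ∃ a ∈ F, ∃ b ∈ F, a ≠ b) := by
  constructor
  · rintro ⟨S, hSF, hp, hq⟩
    refine ⟨?_, ?_, ?_⟩
    · rintro (h | h)
      · obtain ⟨a, ha⟩ := hp.mp h; exact ⟨a, hSF ha⟩
      · obtain ⟨a, ha⟩ := hq.mp h; exact ⟨a, ha.1⟩
    · rintro ⟨hnp, hnq⟩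
      have hS : S = ∅ := Set.not_nonempty_iff_eq_empty.mp (fun h => hnp (hp.mpr h))
      have hFS : F \ S = ∅ := Set.not_nonempty_iff_eq_empty.mp (fun h => hnq (hq.mpr h))
      rw [hS, Set.diff_empty] at hFS
      exact hFS
    · rintro ⟨h1, h2⟩
      obtain ⟨a, ha⟩ := hp.mp h1
      obtain ⟨b, hb⟩ := hq.mp h2
      exact ⟨a, hSF ha, b, hb.1, fun h => hb.2 (h ▸ ha)⟩
  · rintro ⟨c1, c2, c3⟩
    by_cases hp : p <;> by_cases hq : q
    · obtain ⟨a, ha, b, hb, hab⟩ := c3 ⟨hp, hq⟩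
      exact ⟨{a}, Set.singleton_subset_iff.mpr ha,
        iff_of_true hp ⟨a, rfl⟩, iff_of_true hq ⟨b, hb, fun h => hab (h.symm)⟩⟩
    · exact ⟨F, Set.Subset.rfl, iff_of_true hp (c1 (Or.inl hp)),
        iff_of_false hq (by rw [Set.diff_self]; exact Set.not_nonempty_empty)⟩
    · exact ⟨∅, Set.empty_subset F, iff_of_false hp (by simp),
        iff_of_true hq (by rw [Set.diff_empty]; exact c1 (Or.inr hq))⟩
    · refine ⟨∅, Set.empty_subset F, iff_of_false hp (by simp), iff_of_false hq ?_⟩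
      rw [c2 ⟨hp, hq⟩]
      simp

lemma ch_nonempty_transfer {F₁ : Set X} {F₂ : Set Y}
    (h0 : F₁ = ∅ ↔ F₂ = ∅)
    (h1 : (F₁.Finite ∧ F₁.ncard = 1) ↔ (F₂.Finite ∧ F₂.ncard = 1)) (p q : Prop) :
    (Ch F₁ p q).Nonempty ↔ (Ch F₂ p q).Nonempty := by
  have hne : F₁.Nonempty ↔ F₂.Nonempty := by
    rw [Set.nonempty_iff_ne_empty, Set.nonempty_iff_ne_empty]
    exact not_congr h0
  have h2 : (∃ a ∈ F₁, ∃ b ∈ F₁, a ≠ b) ↔ (∃ a ∈ F₂, ∃ b ∈ F₂, a ≠ b) := by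
    rw [two_le_iff, two_le_iff]
    exact and_congr hne (not_congr h1)
  rw [ch_nonempty_iff, ch_nonempty_iff]
  constructor
  · rintro ⟨c1, c2, c3⟩
    exact ⟨fun h => hne.mp (c1 h), fun h => h0.mp (c2 h), fun h => h2.mp (c3 h)⟩
  · rintro ⟨c1, c2, c3⟩
    exact ⟨fun h => hne.mpr (c1 h), fun h => h0.mpr (c2 h), fun h => h2.mpr (c3 h)⟩

lemma ch_subsingleton {F : Set X} {p q : Prop} (h : ¬(p ∧ q)) : (Ch F p q).Subsingleton := by
  rintro S ⟨hSF, hSp, hSq⟩ T ⟨hTF, hTp, hTq⟩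
  rcases not_and_or.mp h with hp | hq
  · have hS : S = ∅ := Set.not_nonempty_iff_eq_empty.mp (fun hn => hp (hSp.mpr hn))
    have hT : T = ∅ := Set.not_nonempty_iff_eq_empty.mp (fun hn => hp (hTp.mpr hn))
    rw [hS, hT]
  · have hS : S = F := by
      have := Set.not_nonempty_iff_eq_empty.mp (fun hn => hq (hSq.mpr hn))
      exact hSF.antisymm (Set.diff_eq_empty.mp this)
    have hT : T = F := by
      have := Set.not_nonempty_iff_eq_empty.mp (fun hn => hq (hTq.mpr hn))
      exact hTF.antisymm (Set.diff_eq_empty.mp this)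
    rw [hS, hT]

lemma diff_eq_image_compl {F S : Set X} :
    F \ S = Subtype.val '' ((Subtype.val ⁻¹' S : Set ↥F)ᶜ) := by
  ext y
  constructor
  · rintro ⟨hyF, hyS⟩
    exact ⟨⟨y, hyF⟩, hyS, rfl⟩
  · rintro ⟨⟨x, hx⟩, hxS, rfl⟩
    exact ⟨hx, hxS⟩

/-- `Ch F p q` as a subtype of `Set ↥F`. -/
noncomputable def chEquivSub (F : Set X) (p q : Prop) :
    ↥(Ch F p q) ≃ {s : Set ↥F // (p ↔ s.Nonempty) ∧ (q ↔ sᶜ.Nonempty)} where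
  toFun S := ⟨Subtype.val ⁻¹' S.1, by
    obtain ⟨hSF, hp, hq⟩ := S.2
    constructor
    · exact hp.trans ⟨fun ⟨a, ha⟩ => ⟨⟨a, hSF ha⟩, ha⟩, fun ⟨x, hx⟩ => ⟨x.1, hx⟩⟩
    · exact hq.trans ⟨fun ⟨a, ha⟩ => ⟨⟨a, ha.1⟩, ha.2⟩, fun ⟨x, hx⟩ => ⟨x.1, x.2, hx⟩⟩⟩
  invFun s := ⟨Subtype.val '' s.1, by
    refine ⟨by rintro _ ⟨x, -, rfl⟩; exact x.2, ?_, ?_⟩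
    · exact s.2.1.trans
        ⟨fun ⟨x, hx⟩ => ⟨x.1, x, hx, rfl⟩, fun ⟨a, x, hx, hxa⟩ => ⟨x, hx⟩⟩
    · refine s.2.2.trans ⟨fun ⟨x, hx⟩ => ⟨x.1, x.2, fun ⟨y, hy, hyx⟩ => ?_⟩,
        fun ⟨a, haF, hans⟩ => ⟨⟨a, haF⟩, fun h => hans ⟨⟨a, haF⟩, h, rfl⟩⟩⟩
      exact hx (Subtype.ext hyx.symm ▸ hy)⟩
  left_inv S := by
    apply Subtype.ext
    exact Set.image_preimage_eq_of_subset (by rw [Subtype.range_coe]; exact S.2.1)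
  right_inv s := by
    apply Subtype.ext
    exact Set.preimage_image_eq _ Subtype.coe_injective

/-- Transport the subtype description along an equivalence of fibres. -/
noncomputable def subEquiv {A B : Type*} (e : A ≃ B) (p q : Prop) :
    {s : Set A // (p ↔ s.Nonempty) ∧ (q ↔ sᶜ.Nonempty)} ≃
      {t : Set B // (p ↔ t.Nonempty) ∧ (q ↔ tᶜ.Nonempty)} :=
  (Equiv.Set.congr e).subtypeEquiv (fun s => by
    simp only [Equiv.Set.congr_apply]
    rw [← e.image_compl, Set.image_nonempty, Set.image_nonempty])

noncomputable def chEquivOfFibreEquiv {F₁ : Set X} {F₂ : Set Y} (e : ↥F₁ ≃ ↥F₂) (p q : Prop) :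
    ↥(Ch F₁ p q) ≃ ↥(Ch F₂ p q) :=
  (chEquivSub F₁ p q).trans ((subEquiv e p q).trans (chEquivSub F₂ p q).symm)

lemma key {X Y C : Type*} (f : X → C) (g : Y → C) (N : ℕ)
    (hN : 2 ≤ N) (hsim : JSimilar f g N) (m : ℕ) (hm : m < N)
    (P : (C → Prop) × (C → Prop)) (h : IsSpecial (Lift f) P m) :
    IsSpecial (Lift g) P m := by
  obtain ⟨hfin, hcard⟩ := h
  have h0 : ∀ α, (f ⁻¹' {α} = ∅) ↔ (g ⁻¹' {α} = ∅) := by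
    intro α
    have hs := hsim 0 (by omega) α
    constructor
    · intro he
      have hg := hs.mp ⟨he ▸ Set.finite_empty, by rw [he, Set.ncard_empty]⟩
      exact (Set.ncard_eq_zero hg.1).mp hg.2
    · intro he
      have hf := hs.mpr ⟨he ▸ Set.finite_empty, by rw [he, Set.ncard_empty]⟩
      exact (Set.ncard_eq_zero hf.1).mp hf.2
  have h1 : ∀ α, ((f ⁻¹' {α}).Finite ∧ (f ⁻¹' {α}).ncard = 1) ↔
      ((g ⁻¹' {α}).Finite ∧ (g ⁻¹' {α}).ncard = 1) := fun α => hsim 1 (by omega) α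
  have hne : ∀ α, (Ch (f ⁻¹' {α}) (P.1 α) (P.2 α)).Nonempty ↔
      (Ch (g ⁻¹' {α}) (P.1 α) (P.2 α)).Nonempty :=
    fun α => ch_nonempty_transfer (h0 α) (h1 α) _ _
  rcases Nat.eq_zero_or_pos m with rfl | hm1
  · have hfe : Lift f ⁻¹' {P} = ∅ := (Set.ncard_eq_zero hfin).mp hcard
    have hge : Lift g ⁻¹' {P} = ∅ := by
      rw [Set.eq_empty_iff_forall_notMem]
      intro B hB
      have s := fibEquiv g P ⟨B, hB⟩
      have hch : ∀ α, (Ch (f ⁻¹' {α}) (P.1 α) (P.2 α)).Nonempty :=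
        fun α => (hne α).mpr ⟨(s α).1, (s α).2⟩
      have A := (fibEquiv f P).symm (fun α => ⟨(hch α).choose, (hch α).choose_spec⟩)
      exact Set.eq_empty_iff_forall_notMem.mp hfe _ A.2
    exact ⟨hge ▸ Set.finite_empty, by rw [hge, Set.ncard_empty]⟩
  · obtain ⟨A₀, hA₀⟩ : (Lift f ⁻¹' {P}).Nonempty :=
      Set.nonempty_of_ncard_ne_zero (by omega)
    haveI hfinsub : Finite ↥(Lift f ⁻¹' {P}) := hfin.to_subtype
    have E : ∀ α, Nonempty
        (↥(Ch (f ⁻¹' {α}) (P.1 α) (P.2 α)) ≃ ↥(Ch (g ⁻¹' {α}) (P.1 α) (P.2 α))) := by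
      intro α
      by_cases hsmall : (f ⁻¹' {α}).Finite ∧ (f ⁻¹' {α}).ncard < N
      · have hg := (hsim _ hsmall.2 α).mp ⟨hsmall.1, rfl⟩
        haveI : Finite ↥(f ⁻¹' {α}) := hsmall.1.to_subtype
        haveI : Finite ↥(g ⁻¹' {α}) := hg.1.to_subtype
        have hc : Nat.card ↥(f ⁻¹' {α}) = Nat.card ↥(g ⁻¹' {α}) := by
          rw [Nat.card_coe_set_eq, Nat.card_coe_set_eq, hg.2]
        obtain ⟨e⟩ := Finite.card_eq.mp hc
        exact ⟨chEquivOfFibreEquiv e _ _⟩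
      · have hnpq : ¬(P.1 α ∧ P.2 α) := by
          rintro ⟨hp, hq⟩
          apply hsmall
          have hbig : ∀ x, ∃ y ∈ f ⁻¹' {α}, y ≠ x := by
            by_contra hc
            push_neg at hc
            obtain ⟨x, hx⟩ := hc
            have hsub : f ⁻¹' {α} ⊆ {x} := fun y hy => hx y hy
            refine hsmall ⟨(Set.finite_singleton x).subset hsub, ?_⟩
            have := Set.ncard_le_ncard hsub (Set.finite_singleton x)
            rw [Set.ncard_singleton] at this
            omega
          have hmem : ∀ x : ↥(f ⁻¹' {α}),
              ((A₀ \ f ⁻¹' {α}) ∪ {x.1}) ∈ Lift f ⁻¹' {P} := by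
            intro x
            rw [Set.mem_preimage, Set.mem_singleton_iff, mem_lift_iff]
            intro β
            by_cases hβ : β = α
            · subst hβ
              have e1 : ((A₀ \ f ⁻¹' {β}) ∪ {x.1}) ∩ f ⁻¹' {β} = {x.1} := by
                ext z
                simp only [Set.mem_inter_iff, Set.mem_union, Set.mem_diff,
                  Set.mem_preimage, Set.mem_singleton_iff]
                constructor
                · rintro ⟨(⟨hz, hzF⟩ | hz), hzβ⟩
                  · exact absurd hzβ hzF
                  · exact hz
                · rintro rfl
                  exact ⟨Or.inr rfl, x.2⟩
              have e2 : f ⁻¹' {β} \ ((A₀ \ f ⁻¹' {β}) ∪ {x.1}) = f ⁻¹' {β} \ {x.1} := by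
                ext z
                simp only [Set.mem_diff, Set.mem_union, Set.mem_preimage,
                  Set.mem_singleton_iff, not_or, Set.mem_diff, not_and, not_not]
                constructor
                · rintro ⟨hzβ, h1', h2'⟩
                  exact ⟨hzβ, h2'⟩
                · rintro ⟨hzβ, hz⟩
                  exact ⟨hzβ, fun _ => hzβ, hz⟩
              rw [e1, e2]
              constructor
              · exact iff_of_true hp ⟨x.1, rfl⟩
              · refine iff_of_true hq ?_
                obtain ⟨y, hy, hyx⟩ := hbig x.1
                exact ⟨y, hy, hyx⟩
            · have hxβ : x.1 ∉ f ⁻¹' {β} := by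
                intro hc
                rw [Set.mem_preimage, Set.mem_singleton_iff] at hc
                have := x.2
                rw [Set.mem_preimage, Set.mem_singleton_iff] at this
                exact hβ (hc.symm.trans this)
              have e1 : ((A₀ \ f ⁻¹' {α}) ∪ {x.1}) ∩ f ⁻¹' {β} = A₀ ∩ f ⁻¹' {β} := by
                ext z
                simp only [Set.mem_inter_iff, Set.mem_union, Set.mem_diff,
                  Set.mem_preimage, Set.mem_singleton_iff]
                constructor
                · rintro ⟨(⟨hz, -⟩ | rfl), hzβ⟩
                  · exact ⟨hz, hzβ⟩
                  · exact absurd hzβ (by simpa using hxβ)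
                · rintro ⟨hz, hzβ⟩
                  exact ⟨Or.inl ⟨hz, fun hc => hβ (hzβ.symm.trans hc)⟩, hzβ⟩
              have e2 : f ⁻¹' {β} \ ((A₀ \ f ⁻¹' {α}) ∪ {x.1}) = f ⁻¹' {β} \ A₀ := by
                ext z
                simp only [Set.mem_diff, Set.mem_union, Set.mem_preimage,
                  Set.mem_singleton_iff, not_or]
                constructor
                · rintro ⟨hzβ, h1', h2'⟩
                  exact ⟨hzβ, fun hz => h1' ⟨hz, fun hc => hβ (hzβ.symm.trans hc)⟩⟩
                · rintro ⟨hzβ, hz⟩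
                  refine ⟨hzβ, fun hc => hz hc.1, fun hc => ?_⟩
                  exact hxβ (by rw [hc] at hzβ; exact hzβ)
              rw [e1, e2]
              exact (mem_lift_iff f P A₀).mp hA₀ β
          have hinj : Function.Injective
              (fun x : ↥(f ⁻¹' {α}) =>
                (⟨(A₀ \ f ⁻¹' {α}) ∪ {x.1}, hmem x⟩ : ↥(Lift f ⁻¹' {P}))) := by
            intro x y hxy
            have hs : (A₀ \ f ⁻¹' {α}) ∪ {x.1} = (A₀ \ f ⁻¹' {α}) ∪ {y.1} :=
              congrArg Subtype.val hxy
            have hx : x.1 ∈ (A₀ \ f ⁻¹' {α}) ∪ {y.1} := by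
              rw [← hs]; exact Or.inr rfl
            rcases hx with hx | hx
            · exact absurd x.2 hx.2
            · exact Subtype.ext hx
          haveI : Finite ↥(f ⁻¹' {α}) := Finite.of_injective _ hinj
          have hcle : Nat.card ↥(f ⁻¹' {α}) ≤ Nat.card ↥(Lift f ⁻¹' {P}) :=
            Nat.card_le_card_of_injective _ hinj
          rw [Nat.card_coe_set_eq, Nat.card_coe_set_eq, hcard] at hcle
          exact ⟨Set.finite_coe_iff.mp this, lt_of_le_of_lt hcle hm⟩
        haveI s1 : Subsingleton ↥(Ch (f ⁻¹' {α}) (P.1 α) (P.2 α)) :=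
          (Set.subsingleton_coe _).mpr (ch_subsingleton hnpq)
        haveI s2 : Subsingleton ↥(Ch (g ⁻¹' {α}) (P.1 α) (P.2 α)) :=
          (Set.subsingleton_coe _).mpr (ch_subsingleton hnpq)
        exact ⟨equivOfSubsingletonOfSubsingleton
          (fun s => ⟨((hne α).mp ⟨s.1, s.2⟩).choose, ((hne α).mp ⟨s.1, s.2⟩).choose_spec⟩)
          (fun t => ⟨((hne α).mpr ⟨t.1, t.2⟩).choose, ((hne α).mpr ⟨t.1, t.2⟩).choose_spec⟩)⟩
    let Eqv : ↥(Lift f ⁻¹' {P}) ≃ ↥(Lift g ⁻¹' {P}) :=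
      (fibEquiv f P).trans
        ((Equiv.piCongrRight fun α => Classical.choice (E α)).trans (fibEquiv g P).symm)
    haveI : Finite ↥(Lift g ⁻¹' {P}) := Finite.of_equiv _ Eqv
    refine ⟨Set.finite_coe_iff.mp this, ?_⟩
    rw [← Nat.card_coe_set_eq, ← Nat.card_congr Eqv, Nat.card_coe_set_eq, hcard]

end Stmt11Aux

/-- Similarity is preserved by lifting: if `f` and `g` are `N`-similar with `N ≥ 2`,
then the lifted colourings on the power sets are `N`-similar. -/
theorem stmt11 {X Y C : Type*} [Finite C] (f : X → C) (g : Y → C) (N : ℕ)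
    (hN : 2 ≤ N) (hsim : JSimilar f g N) :
    JSimilar (Lift f) (Lift g) N := by
  intro m hm P
  constructor
  · exact Stmt11Aux.key f g N hN hsim m hm P
  · exact Stmt11Aux.key g f N hN (fun m' hm' α => (hsim m' hm' α).symm) m hm P
end

section
/- Let N be a model of TSTI and let M be the finitely generated model of TST on m atoms, where m ≥ G_k(r) and a₁, ..., a_k are elements of N of types r₁ ≤ ... ≤ r_k = r. Then there exists a sequence of injections f_n : M_n → N_n such that (i) for all x ∈ M_n and y ∈ M_{n+1}, M ⊨ x ∈_n y iff N ⊨ f_n(x) ∈_n f_{n+1}(y), and (ii) each a_j lies in the range of f_{r_j}. -/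
/-- The iterated power set: `IterP X 0 = X`, `IterP X (n+1) = P(IterP X n)`. -/
def IterP (X : Type) : ℕ → Type
  | 0 => X
  | n + 1 => Set (IterP X n)

/-- A model of TST: domains `D n` for each type, membership relations between
consecutive types, satisfying extensionality and comprehension. -/
structure TSTModel where
  D : ℕ → Type
  mem : ∀ n, D n → D (n + 1) → Prop
  ext : ∀ n (y z : D (n + 1)), (∀ x, mem n x y ↔ mem n x z) → y = z
  comp : ∀ n (φ : D n → Prop), ∃ y : D (n + 1), ∀ x, mem n x y ↔ φ x

/-- The recursion `G_k(0) = k`, `G_k(n+1) = C(G_k(n), 2) + k`. -/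
def Gk (k : ℕ) : ℕ → ℕ
  | 0 => k
  | n + 1 => Nat.choose (Gk k n) 2 + k

namespace Stmt13Aux

variable (N : TSTModel)

/-- a point in every level, given one at level 0 -/
noncomputable def pt (h0 : Nonempty (N.D 0)) : ∀ n, N.D n
  | 0 => h0.some
  | n + 1 => (N.comp n fun _ => True).choose

variable (h0 : Nonempty (N.D 0))

open Classical in
/-- a separator for an unordered pair -/
noncomputable def sep {n : ℕ} (z : Sym2 (N.D (n + 1))) : N.D n :=
  if h : ∃ s, (∃ t ∈ z, N.mem n s t) ∧ (∃ t ∈ z, ¬ N.mem n s t) then h.choose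
  else pt N h0 n

theorem sep_spec {n : ℕ} {t t' : N.D (n + 1)} (hne : t ≠ t') :
    ¬ (N.mem n (sep N h0 s(t, t')) t ↔ N.mem n (sep N h0 s(t, t')) t') := by
  have hex : ∃ s, (∃ u ∈ s(t, t'), N.mem n s u) ∧ (∃ u ∈ s(t, t'), ¬ N.mem n s u) := by
    by_contra hc
    push_neg at hc
    apply hne
    apply N.ext
    intro s
    constructor
    · intro h1
      exact hc s ⟨t, by simp, h1⟩ t' (by simp)
    · intro h2
      exact hc s ⟨t', by simp, h2⟩ t (by simp)
  rw [sep, dif_pos hex]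
  obtain ⟨⟨u1, hu1, hm1⟩, ⟨u2, hu2, hm2⟩⟩ := hex.choose_spec
  rw [Sym2.mem_iff] at hu1 hu2
  intro hiff
  rcases hu1 with rfl | rfl <;> rcases hu2 with rfl | rfl <;> tauto

open Classical in
/-- separators for all pairs from a finite set -/
noncomputable def sepSet {n : ℕ} (S : Finset (N.D (n + 1))) : Finset (N.D n) :=
  (S.sym2.filter fun z => ¬ z.IsDiag).image (sep N h0)

theorem sep_mem_sepSet {n : ℕ} {S : Finset (N.D (n + 1))} {t t' : N.D (n + 1)}
    (ht : t ∈ S) (ht' : t' ∈ S) (hne : t ≠ t') : sep N h0 s(t, t') ∈ sepSet N h0 S := by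
  classical
  apply Finset.mem_image_of_mem
  simp [Finset.mk_mem_sym2_iff, ht, ht', Sym2.mk_isDiag_iff, hne]

theorem sepSet_card {n : ℕ} (S : Finset (N.D (n + 1))) :
    (sepSet N h0 S).card ≤ S.card.choose 2 := by
  classical
  refine (Finset.card_image_le).trans ?_
  have h1 : (S.sym2.filter fun z => ¬ z.IsDiag).card + (S.sym2.filter fun z => z.IsDiag).card
      = S.sym2.card := by
    rw [add_comm]
    exact Finset.card_filter_add_card_filter_not _
  have h2 : (S.sym2.filter fun z => z.IsDiag) = S.diag.image Sym2.mk.uncurry := by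
    rw [Finset.sym2_eq_image]
    exact Sym2.filter_image_mk_isDiag S
  have h3 : (S.diag.image Sym2.mk.uncurry).card = S.card := by
    rw [Finset.card_image_of_injOn, Finset.diag_card]
    intro p hp q hq hpq
    rw [Finset.mem_coe, Finset.mem_diag] at hp hq
    obtain ⟨hp1, hp2⟩ := hp; obtain ⟨hq1, hq2⟩ := hq
    have := (Sym2.mk_eq_mk_iff (p := p) (q := q)).mp hpq
    rcases this with h | h
    · exact h
    · cases p; cases q; simp_all [Prod.ext_iff]
  rw [Finset.card_sym2, h2, h3] at h1
  have h4 : Nat.choose (S.card + 1) 2 = S.card.choose 2 + S.card := by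
    rw [Nat.choose_succ_succ]
    simp [Nat.choose_one_right, Nat.add_comm]
  omega

end Stmt13Aux

namespace Part2
variable (N : TSTModel) (h0 : Nonempty (N.D 0)) {k : ℕ} (r : Fin k → ℕ)
  (a : ∀ j, N.D (r j)) (rmax : ℕ)

open Stmt13Aux

open Classical in
noncomputable def tgt (n : ℕ) : Finset (N.D n) :=
  Finset.univ.biUnion fun j : Fin k => if h : r j = n then {h ▸ a j} else ∅

theorem tgt_card (n : ℕ) : (tgt N r a n).card ≤ k := by
  classical
  refine (Finset.card_biUnion_le).trans ?_
  calc ∑ j : Fin k, (if h : r j = n then ({h ▸ a j} : Finset (N.D n)) else ∅).card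
      ≤ ∑ _j : Fin k, 1 := by
        apply Finset.sum_le_sum
        intro j _
        split <;> simp
    _ = k := by simp

theorem a_mem_tgt (j : Fin k) : a j ∈ tgt N r a (r j) := by
  classical
  rw [tgt, Finset.mem_biUnion]
  exact ⟨j, Finset.mem_univ j, by simp⟩

open Classical in
noncomputable def TAux : ℕ → ∀ n, Finset (N.D n)
  | 0 => fun _ => ∅
  | fuel + 1 => fun n => tgt N r a n ∪ sepSet N h0 (TAux fuel (n + 1))

theorem TAux_card : ∀ (fuel n : ℕ), (TAux N h0 r a (fuel + 1) n).card ≤ Gk k fuel := by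
  intro fuel
  induction fuel with
  | zero =>
    intro n
    classical
    refine (Finset.card_union_le _ _).trans ?_
    rw [show TAux N h0 r a 0 (n + 1) = ∅ from rfl]
    have h1 := tgt_card N r a n
    have h2 := sepSet_card N h0 (∅ : Finset (N.D (n + 1)))
    simp only [Finset.card_empty, Nat.choose_zero_succ, Nat.le_zero] at h2
    show _ ≤ Gk k 0
    rw [Gk]
    omega
  | succ fuel ih =>
    intro n
    classical
    refine (Finset.card_union_le _ _).trans ?_
    have h1 := tgt_card N r a n
    have h2 := (sepSet_card N h0 (TAux N h0 r a (fuel + 1) (n + 1))).trans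
      (Nat.choose_le_choose 2 (ih (n + 1)))
    show _ ≤ Gk k (fuel + 1)
    rw [Gk]
    omega

noncomputable def T (n : ℕ) : Finset (N.D n) := TAux N h0 r a (rmax + 1 - n) n

theorem T_card0 : (T N h0 r a rmax 0).card ≤ Gk k rmax := TAux_card N h0 r a rmax 0

theorem a_mem_T (j : Fin k) (h : r j ≤ rmax) : a j ∈ T N h0 r a rmax (r j) := by
  classical
  rw [T, show rmax + 1 - r j = (rmax - r j) + 1 from by omega, TAux]
  exact Finset.mem_union_left _ (a_mem_tgt N r a j)

theorem T_sep {n : ℕ} (h : n ≤ rmax) :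
    sepSet N h0 (T N h0 r a rmax (n + 1)) ⊆ T N h0 r a rmax n := by
  classical
  rw [T, T, show rmax + 1 - n = (rmax - n) + 1 from by omega,
    show rmax + 1 - (n + 1) = rmax - n from by omega, TAux]
  exact Finset.subset_union_right

theorem T_empty {n : ℕ} (h : rmax < n) : T N h0 r a rmax n = ∅ := by
  rw [T, show rmax + 1 - n = 0 from by omega, TAux]

end Part2

namespace Part3
open Stmt13Aux Part2
variable (N : TSTModel) (h0 : Nonempty (N.D 0)) {k : ℕ} (r : Fin k → ℕ)
  (a : ∀ j, N.D (r j)) (rmax : ℕ) (X : Type)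

open Classical in
noncomputable def F (f0 : X → N.D 0) : ∀ n, IterP X n → N.D n
  | 0 => f0
  | n + 1 => fun y =>
    if h : ∃ t ∈ T N h0 r a rmax (n + 1),
        ∀ x : IterP X n, N.mem n (F f0 n x) t ↔ x ∈ (show Set (IterP X n) from y) then
      h.choose
    else (N.comp n fun s => ∃ x : IterP X n,
      x ∈ (show Set (IterP X n) from y) ∧ F f0 n x = s).choose

open Classical in
theorem F_succ (f0 : X → N.D 0) (n : ℕ) (y : IterP X (n + 1)) :
    F N h0 r a rmax X f0 (n + 1) y =
    (if h : ∃ t ∈ T N h0 r a rmax (n + 1),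
        ∀ x : IterP X n, N.mem n (F N h0 r a rmax X f0 n x) t ↔
          x ∈ (show Set (IterP X n) from y) then
      h.choose
    else (N.comp n fun s => ∃ x : IterP X n,
      x ∈ (show Set (IterP X n) from y) ∧ F N h0 r a rmax X f0 n x = s).choose) := rfl

theorem F_mem (f0 : X → N.D 0) (n : ℕ)
    (hinj : Function.Injective (F N h0 r a rmax X f0 n)) (y : IterP X (n + 1))
    (x : IterP X n) :
    N.mem n (F N h0 r a rmax X f0 n x) (F N h0 r a rmax X f0 (n + 1) y) ↔
      x ∈ (show Set (IterP X n) from y) := by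
  classical
  rw [F_succ]
  split_ifs with h
  · exact h.choose_spec.2 x
  · rw [(N.comp n _).choose_spec (F N h0 r a rmax X f0 n x)]
    constructor
    · rintro ⟨x', hx', he⟩
      rwa [← hinj he]
    · intro hx
      exact ⟨x, hx, rfl⟩

theorem F_step (f0 : X → N.D 0) (n : ℕ)
    (hinj : Function.Injective (F N h0 r a rmax X f0 n))
    (hsurj : ∀ t ∈ T N h0 r a rmax n, ∃ x, F N h0 r a rmax X f0 n x = t) :
    Function.Injective (F N h0 r a rmax X f0 (n + 1)) ∧
      ∀ t ∈ T N h0 r a rmax (n + 1), ∃ x, F N h0 r a rmax X f0 (n + 1) x = t := by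
  classical
  constructor
  · intro y z he
    have : ∀ x : IterP X n,
        x ∈ (show Set (IterP X n) from y) ↔ x ∈ (show Set (IterP X n) from z) := by
      intro x
      rw [← F_mem N h0 r a rmax X f0 n hinj y x, ← F_mem N h0 r a rmax X f0 n hinj z x, he]
    exact Set.ext this
  · intro t ht
    have hle : n ≤ rmax := by
      by_contra hlt
      rw [T_empty N h0 r a rmax (by omega)] at ht
      exact absurd ht (Finset.notMem_empty t)
    set yt : IterP X (n + 1) :=
      show Set (IterP X n) from {x | N.mem n (F N h0 r a rmax X f0 n x) t} with hyt
    refine ⟨yt, ?_⟩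
    have hcond : ∃ t' ∈ T N h0 r a rmax (n + 1),
        ∀ x : IterP X n, N.mem n (F N h0 r a rmax X f0 n x) t' ↔
          x ∈ (show Set (IterP X n) from yt) := ⟨t, ht, fun x => Iff.rfl⟩
    rw [F_succ, dif_pos hcond]
    obtain ⟨ht', hspec⟩ := hcond.choose_spec
    by_contra hne
    have hsep := sep_spec N h0 hne
    have hmem : sep N h0 s(hcond.choose, t) ∈ T N h0 r a rmax n :=
      T_sep N h0 r a rmax hle (sep_mem_sepSet N h0 ht' ht hne)
    obtain ⟨x0, hx0⟩ := hsurj _ hmem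
    have h1 : N.mem n (F N h0 r a rmax X f0 n x0) hcond.choose ↔
        N.mem n (F N h0 r a rmax X f0 n x0) t := hspec x0
    rw [hx0] at h1
    exact hsep h1

theorem exists_f0 {β : Type} [Infinite β] [Fintype X] (S : Finset β)
    (hcard : S.card ≤ Fintype.card X) :
    ∃ f0 : X → β, Function.Injective f0 ∧ ∀ t ∈ S, ∃ x, f0 x = t := by
  classical
  obtain ⟨e⟩ : Nonempty ((↥S) ↪ X) :=
    Function.Embedding.nonempty_of_card_le (by simpa using hcard)
  have hinfc : ((↑S : Set β)ᶜ).Infinite := S.finite_toSet.infinite_compl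
  haveI := hinfc.to_subtype
  let j : X ↪ ((↑S : Set β)ᶜ : Set β) :=
    ((Fintype.equivFin X).toEmbedding.trans Fin.valEmbedding).trans (Infinite.natEmbedding _)
  refine ⟨fun x => if h : ∃ s : ↥S, e s = x then (h.choose : β) else (j x : β), ?_, ?_⟩
  · intro x x' he
    dsimp only at he
    by_cases h1 : ∃ s : ↥S, e s = x <;> by_cases h2 : ∃ s : ↥S, e s = x'
    · rw [dif_pos h1, dif_pos h2] at he
      rw [← h1.choose_spec, ← h2.choose_spec, Subtype.ext he]
    · rw [dif_pos h1, dif_neg h2] at he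
      exact absurd (Finset.mem_coe.mpr (he ▸ h1.choose.2)) (j x').2
    · rw [dif_neg h1, dif_pos h2] at he
      exact absurd (Finset.mem_coe.mpr (he ▸ h2.choose.2)) (j x).2
    · rw [dif_neg h1, dif_neg h2] at he
      exact j.injective (Subtype.ext he)
  · intro t ht
    have h : ∃ s : ↥S, e s = e ⟨t, ht⟩ := ⟨⟨t, ht⟩, rfl⟩
    refine ⟨e ⟨t, ht⟩, ?_⟩
    dsimp only
    rw [dif_pos h]
    exact congrArg Subtype.val (e.injective h.choose_spec)

end Part3

/-- Embedding lemma: if `N` is a model of TSTI, `a j ∈ N` are elements of types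
`r 1 ≤ ... ≤ r k ≤ rmax`, and `M` is the finitely generated model of TST on at least
`G_k(rmax)` atoms, then `M` embeds into `N` (levelwise injectively, preserving and
reflecting membership) with every `a j` in the range. -/
theorem stmt13 (N : TSTModel) (hInf : Infinite (N.D 0)) (X : Type) [Fintype X]
    (k : ℕ) (r : Fin k → ℕ) (hmono : Monotone r) (rmax : ℕ) (hr : ∀ j, r j ≤ rmax)
    (a : ∀ j : Fin k, N.D (r j)) (hcard : Gk k rmax ≤ Fintype.card X) :
    ∃ f : ∀ n, IterP X n → N.D n,
      (∀ n, Function.Injective (f n)) ∧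
      (∀ (n : ℕ) (x : IterP X n) (y : IterP X (n + 1)),
        x ∈ (show Set (IterP X n) from y) ↔ N.mem n (f n x) (f (n + 1) y)) ∧
      (∀ j : Fin k, ∃ x : IterP X (r j), f (r j) x = a j) := by
  haveI := hInf
  have h0 : Nonempty (N.D 0) := inferInstance
  classical
  obtain ⟨f0, hf0inj, hf0surj⟩ := Part3.exists_f0 X (Part2.T N h0 r a rmax 0)
    ((Part2.T_card0 N h0 r a rmax).trans hcard)
  set f := Part3.F N h0 r a rmax X f0 with hf
  have key : ∀ n, Function.Injective (f n) ∧
      ∀ t ∈ Part2.T N h0 r a rmax n, ∃ x, f n x = t := by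
    intro n
    induction n with
    | zero => exact ⟨hf0inj, hf0surj⟩
    | succ n ih => exact Part3.F_step N h0 r a rmax X f0 n ih.1 ih.2
  refine ⟨f, fun n => (key n).1, ?_, ?_⟩
  · intro n x y
    exact (Part3.F_mem N h0 r a rmax X f0 n (key n).1 y x).symm
  · intro j
    exact (key (r j)).2 (a j) (Part2.a_mem_T N h0 r a rmax j (hr j))
end

section
/- Let φ = ∃x₁^{r₁} ⋯ ∃x_k^{r_k} ∀y₁^{s₁} ⋯ ∀y_l^{s_l} θ be an ∃*∀* sentence of type theory with r₁ ≤ ... ≤ r_k and θ quantifier-free. If some model N of TSTI satisfies φ, and M is a finitely generated model of TST with at least G_k(r_k) atoms, then M satisfies φ. -/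
/-- The finitely generated model of TST over a set `X`: type `n` is `P^n(X)` and
membership is true membership. -/
def fgModel (X : Type) : TSTModel where
  D := IterP X
  mem := fun n x y => x ∈ (show Set (IterP X n) from y)
  ext := fun n y z h => Set.ext h
  comp := fun n φ => ⟨{x | φ x}, fun _ => Iff.rfl⟩

/-- Quantifier-free formulae of the language of type theory in a context of `p`
variables whose types are given by `ty`. -/
inductive QF (p : ℕ) (ty : Fin p → ℕ) : Type
  | eq (i j : Fin p) (h : ty i = ty j) : QF p ty
  | mem (i j : Fin p) (h : ty j = ty i + 1) : QF p ty
  | not (φ : QF p ty) : QF p ty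
  | and (φ ψ : QF p ty) : QF p ty
  | or (φ ψ : QF p ty) : QF p ty

/-- Evaluation of a quantifier-free formula in a model of TST under an assignment. -/
def QF.eval (N : TSTModel) {p : ℕ} {ty : Fin p → ℕ} (v : ∀ i : Fin p, N.D (ty i)) :
    QF p ty → Prop
  | .eq i j h => cast (congrArg N.D h) (v i) = v j
  | .mem i j h => N.mem (ty i) (v i) (cast (congrArg N.D h) (v j))
  | .not φ => ¬ φ.eval N v
  | .and φ ψ => φ.eval N v ∧ ψ.eval N v
  | .or φ ψ => φ.eval N v ∨ ψ.eval N v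

/-- Satisfaction of the `∃*∀*` sentence `∃ x₁ ⋯ x_k ∀ y₁ ⋯ y_l, θ` in a model of TST,
where the context `Fin (k + l)` lists the `x`'s first and then the `y`'s. -/
def SatEA (N : TSTModel) (k l : ℕ) (ty : Fin (k + l) → ℕ) (θ : QF (k + l) ty) : Prop :=
  ∃ a : ∀ i : Fin k, N.D (ty (Fin.castAdd l i)),
    ∀ b : ∀ j : Fin l, N.D (ty (Fin.natAdd k j)),
      θ.eval N (Fin.addCases a b)

namespace Stmt14
open Function Set

variable (N : TSTModel)


open Classical in
noncomputable def sepS (n : ℕ) (s : Finset (N.D (n + 1))) : Finset (N.D n) :=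
  if h : ∃ x, ∃ y ∈ s, ∃ z ∈ s, ¬ (N.mem n x y ↔ N.mem n x z) then {h.choose} else ∅


noncomputable def Sep (n : ℕ) (T : Finset (N.D (n + 1))) : Finset (N.D n) :=
  @Finset.biUnion _ _ (Classical.decEq _) (T.powersetCard 2) (sepS N n)

lemma Sep_card (n : ℕ) (T : Finset (N.D (n + 1))) : (Sep N n T).card ≤ T.card.choose 2 := by
  classical
  refine le_trans (Finset.card_biUnion_le) (le_trans (Finset.sum_le_card_nsmul _ _ 1 ?_) ?_)
  · intro s _
    simp only [sepS]
    split <;> simp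
  · simp [Finset.card_powersetCard]

lemma sep_spec (n : ℕ) (T : Finset (N.D (n+1))) {y z : N.D (n+1)} (hy : y ∈ T) (hz : z ∈ T)
    (hne : y ≠ z) : ∃ x ∈ Sep N n T, ¬ (N.mem n x y ↔ N.mem n x z) := by
  classical
  have hpair : ({y, z} : Finset (N.D (n+1))) ∈ T.powersetCard 2 := by
    rw [Finset.mem_powersetCard]
    refine ⟨?_, Finset.card_pair hne⟩
    intro w hw
    rcases Finset.mem_insert.1 hw with h | h
    · exact h ▸ hy
    · exact (Finset.mem_singleton.1 h) ▸ hz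
  have hex : ∃ x, ∃ y' ∈ ({y, z} : Finset (N.D (n+1))), ∃ z' ∈ ({y, z} : Finset (N.D (n+1))),
      ¬ (N.mem n x y' ↔ N.mem n x z') := by
    have h1 : ¬ (∀ x, N.mem n x y ↔ N.mem n x z) := fun h => hne (N.ext n y z h)
    simp only [not_forall] at h1
    obtain ⟨x, hx⟩ := h1
    exact ⟨x, y, by simp, z, by simp, hx⟩
  refine ⟨hex.choose, Finset.mem_biUnion.2 ⟨{y, z}, hpair, ?_⟩, ?_⟩
  · simp only [sepS, dif_pos hex]
    exact Finset.mem_singleton.2 rfl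
  · obtain ⟨y', hy', z', hz', hsep⟩ := hex.choose_spec
    have hy' := Finset.mem_insert.1 hy'
    have hz' := Finset.mem_insert.1 hz'
    simp only [Finset.mem_singleton] at hy' hz'
    rcases hy' with rfl | rfl <;> rcases hz' with rfl | rfl
    · exact absurd Iff.rfl hsep
    · exact hsep
    · exact fun h => hsep h.symm
    · exact absurd Iff.rfl hsep

section
variable {k : ℕ} (r : Fin k → ℕ) (a : ∀ i, N.D (r i)) (rmax : ℕ)

open Classical in
noncomputable def Wit (n : ℕ) : Finset (N.D n) :=
  @Finset.biUnion _ _ (Classical.decEq _) Finset.univ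
    (fun i : Fin k => if h : r i = n then {h ▸ a i} else ∅)

lemma Wit_card (n : ℕ) : (Wit N r a n).card ≤ k := by
  classical
  refine le_trans (Finset.card_biUnion_le) (le_trans (Finset.sum_le_card_nsmul _ _ 1 ?_) ?_)
  · intro i _
    split <;> simp
  · simp

lemma mem_Wit (i : Fin k) : a i ∈ Wit N r a (r i) := by
  classical
  refine Finset.mem_biUnion.2 ⟨i, Finset.mem_univ i, ?_⟩
  rw [dif_pos rfl]
  exact Finset.mem_singleton.2 rfl

lemma Wit_empty (n : ℕ) (hn : ∀ i, r i ≤ rmax) (h : rmax < n) : Wit N r a n = ∅ := by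
  classical
  refine Finset.eq_empty_of_forall_notMem (fun x hx => ?_)
  obtain ⟨i, _, hxi⟩ := Finset.mem_biUnion.1 hx
  rw [dif_neg (by have := hn i; omega)] at hxi
  exact absurd hxi (Finset.notMem_empty x)

open Classical in
noncomputable def Tset : (n : ℕ) → Finset (N.D n) := fun n =>
  (Wit N r a n) ∪ (if h : n < rmax then Sep N n (Tset (n + 1)) else ∅)
termination_by n => rmax - n
decreasing_by simp_wf; omega

lemma Tset_card (n : ℕ) : (Tset N r a rmax n).card ≤ Gk k (rmax - n) := by
  classical
  rw [Tset]
  refine le_trans (Finset.card_union_le _ _) ?_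
  by_cases h : n < rmax
  · rw [dif_pos h]
    have h1 : rmax - n = (rmax - (n + 1)) + 1 := by omega
    rw [h1]
    have h2 := Sep_card N n (Tset N r a rmax (n + 1))
    have h3 := Tset_card (n + 1)
    have h4 : (Tset N r a rmax (n+1)).card.choose 2 ≤ (Gk k (rmax - (n+1))).choose 2 :=
      Nat.choose_le_choose 2 h3
    calc (Wit N r a n).card + (Sep N n (Tset N r a rmax (n+1))).card
        ≤ k + (Gk k (rmax - (n+1))).choose 2 :=
          Nat.add_le_add (Wit_card N r a n) (le_trans h2 h4)
      _ = Gk k ((rmax - (n+1)) + 1) := by rw [Gk]; omega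
  · rw [dif_neg h]
    have : rmax - n = 0 := by omega
    simp [this, Gk, Wit_card N r a n]
termination_by rmax - n
decreasing_by simp_wf; omega

lemma Wit_subset_Tset (n : ℕ) : Wit N r a n ⊆ Tset N r a rmax n := by
  classical
  rw [Tset]; exact Finset.subset_union_left

lemma Tset_sep (n : ℕ) (hn : n < rmax) {y z : N.D (n+1)} (hy : y ∈ Tset N r a rmax (n+1))
    (hz : z ∈ Tset N r a rmax (n+1)) (hne : y ≠ z) :
    ∃ x ∈ Tset N r a rmax n, ¬ (N.mem n x y ↔ N.mem n x z) := by
  classical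
  obtain ⟨x, hx, hsep⟩ := sep_spec N n _ hy hz hne
  refine ⟨x, ?_, hsep⟩
  rw [Tset, dif_pos hn]
  exact Finset.mem_union_right _ hx

lemma Tset_empty (n : ℕ) (hn : ∀ i, r i ≤ rmax) (h : rmax < n) : Tset N r a rmax n = ∅ := by
  classical
  rw [Tset, dif_neg (by omega), Wit_empty N r a rmax n hn h, Finset.union_empty]

end

lemma exists_inj_cover {α β : Type} [Fintype α] [Infinite β] (s : Finset β)
    (h : s.card ≤ Fintype.card α) : ∃ f : α → β, Injective f ∧ ↑s ⊆ range f := by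
  classical
  obtain ⟨e⟩ : Nonempty (↥(s : Set β) ↪ α) := by
    apply Function.Embedding.nonempty_of_card_le
    simpa using h
  have hcompl : ((s : Set β)ᶜ).Infinite := Set.Finite.infinite_compl (s.finite_toSet)
  haveI : Infinite ↥((s : Set β)ᶜ) := Set.infinite_coe_iff.2 hcompl
  obtain ⟨j⟩ : Nonempty (α ↪ ↥((s : Set β)ᶜ)) :=
    ⟨((Fintype.equivFin α).toEmbedding.trans (Fin.valEmbedding)).trans (Infinite.natEmbedding _)⟩
  refine ⟨fun x => if h : ∃ t : ↥(s : Set β), e t = x then ↑h.choose else ↑(j x), ?_, ?_⟩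
  · intro x₁ x₂ hx
    dsimp only at hx
    by_cases h1 : ∃ t : ↥(s : Set β), e t = x₁ <;> by_cases h2 : ∃ t : ↥(s : Set β), e t = x₂
    · rw [dif_pos h1, dif_pos h2] at hx
      have := Subtype.ext hx
      rw [← h1.choose_spec, ← h2.choose_spec, this]
    · rw [dif_pos h1, dif_neg h2] at hx
      exact absurd (hx ▸ h1.choose.2) (j x₂).2
    · rw [dif_neg h1, dif_pos h2] at hx
      exact absurd (hx ▸ (j x₁).2) (fun hh => hh h2.choose.2)
    · rw [dif_neg h1, dif_neg h2] at hx
      exact j.injective (Subtype.ext hx)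
  · intro b hb
    refine ⟨e ⟨b, hb⟩, ?_⟩
    have h1 : ∃ t : ↥(s : Set β), e t = e ⟨b, hb⟩ := ⟨⟨b, hb⟩, rfl⟩
    dsimp only
    rw [dif_pos h1]
    have := e.injective h1.choose_spec
    rw [this]

/-- Definitional identity between `IterP X (n+1)` and `Set (IterP X n)`. -/
def asSet {X : Type} {n : ℕ} (S : IterP X (n + 1)) : Set (IterP X n) := S

section
variable {k : ℕ} (r : Fin k → ℕ) (a : ∀ i, N.D (r i)) (rmax : ℕ)
variable (X : Type) [Fintype X]

open Classical in
noncomputable def Hmap (hInf : Infinite (N.D 0))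
    (hc : (Tset N r a rmax 0).card ≤ Fintype.card X) :
    (n : ℕ) → IterP X n → N.D n
  | 0 => (@exists_inj_cover X (N.D 0) _ hInf (Tset N r a rmax 0) hc).choose
  | n + 1 => fun S =>
      if h : ∃ t ∈ Tset N r a rmax (n + 1),
          {u : IterP X n | N.mem n (Hmap hInf hc n u) t} = asSet S
      then h.choose
      else (N.comp n (fun x => ∃ u ∈ asSet S, Hmap hInf hc n u = x)).choose

variable (hInf : Infinite (N.D 0)) (hc : (Tset N r a rmax 0).card ≤ Fintype.card X)

lemma Hmap_trace (n : ℕ) (hinj : Injective (Hmap N r a rmax X hInf hc n))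
    (S : IterP X (n + 1)) (u : IterP X n) :
    N.mem n (Hmap N r a rmax X hInf hc n u) (Hmap N r a rmax X hInf hc (n + 1) S) ↔
      u ∈ asSet S := by
  classical
  rw [Hmap]
  dsimp only
  split
  · next h =>
    conv_rhs => rw [← h.choose_spec.2]
    rfl
  · next h =>
    rw [(N.comp n _).choose_spec]
    constructor
    · rintro ⟨u', hu', hequ⟩
      exact (hinj hequ) ▸ hu'
    · intro hu
      exact ⟨u, hu, rfl⟩

lemma Hmap_spec (hr : ∀ i, r i ≤ rmax) (n : ℕ) :
    Injective (Hmap N r a rmax X hInf hc n) ∧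
      ↑(Tset N r a rmax n) ⊆ range (Hmap N r a rmax X hInf hc n) := by
  classical
  induction n with
  | zero =>
    exact (@exists_inj_cover X (N.D 0) _ hInf (Tset N r a rmax 0) hc).choose_spec
  | succ n ih =>
    obtain ⟨hinj, hcov⟩ := ih
    have htr := Hmap_trace N r a rmax X hInf hc n hinj
    -- distinct elements of Tset (n+1) have distinct traces
    have hdist : ∀ t ∈ Tset N r a rmax (n + 1), ∀ t' ∈ Tset N r a rmax (n + 1),
        ({u : IterP X n | N.mem n (Hmap N r a rmax X hInf hc n u) t} =
          {u : IterP X n | N.mem n (Hmap N r a rmax X hInf hc n u) t'}) → t = t' := by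
      intro t ht t' ht' htt
      by_contra hne
      by_cases hlt : n < rmax
      · obtain ⟨x, hx, hsep⟩ := Tset_sep N r a rmax n hlt ht ht' hne
        obtain ⟨u, rfl⟩ := hcov hx
        have : u ∈ {u : IterP X n | N.mem n (Hmap N r a rmax X hInf hc n u) t} ↔
            u ∈ {u : IterP X n | N.mem n (Hmap N r a rmax X hInf hc n u) t'} := by
          rw [htt]
        exact hsep this
      · have : Tset N r a rmax (n + 1) = ∅ := Tset_empty N r a rmax (n + 1) hr (by omega)
        rw [this] at ht
        exact absurd ht (Finset.notMem_empty t)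
    have hinj' : Injective (Hmap N r a rmax X hInf hc (n + 1)) := by
      intro S₁ S₂ hS
      show asSet S₁ = asSet S₂
      ext u
      rw [show (u ∈ asSet S₁) = (u ∈ asSet S₁) from rfl, ← htr S₁ u, ← htr S₂ u, hS]
    refine ⟨hinj', ?_⟩
    intro t ht
    have ht' : t ∈ Tset N r a rmax (n + 1) := ht
    have hcond : ∃ t'' ∈ Tset N r a rmax (n + 1),
        {u : IterP X n | N.mem n (Hmap N r a rmax X hInf hc n u) t''} =
          asSet (show IterP X (n+1) from
            {u : IterP X n | N.mem n (Hmap N r a rmax X hInf hc n u) t}) := ⟨t, ht', rfl⟩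
    refine ⟨(show IterP X (n+1) from
      {u : IterP X n | N.mem n (Hmap N r a rmax X hInf hc n u) t}), ?_⟩
    rw [Hmap]
    dsimp only
    rw [dif_pos hcond]
    exact hdist _ hcond.choose_spec.1 t ht' hcond.choose_spec.2

end

section
variable {k : ℕ} (r : Fin k → ℕ) (a : ∀ i, N.D (r i)) (rmax : ℕ)
variable (X : Type) [Fintype X]
variable (hInf : Infinite (N.D 0)) (hc : (Tset N r a rmax 0).card ≤ Fintype.card X)

lemma cast_Hmap {m n : ℕ} (h : m = n) (x : IterP X m) :
    cast (congrArg N.D h) (Hmap N r a rmax X hInf hc m x) =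
      Hmap N r a rmax X hInf hc n (cast (congrArg (IterP X) h) x) := by
  subst h; rfl

lemma eval_transfer (hinj : ∀ n, Injective (Hmap N r a rmax X hInf hc n))
    (hmem : ∀ n (u : IterP X n) (S : IterP X (n + 1)),
      N.mem n (Hmap N r a rmax X hInf hc n u) (Hmap N r a rmax X hInf hc (n + 1) S) ↔
        u ∈ asSet S)
    {p : ℕ} {ty : Fin p → ℕ} (θ : QF p ty) (v : ∀ i, IterP X (ty i)) :
    QF.eval (fgModel X) v θ ↔
      QF.eval N (fun i => Hmap N r a rmax X hInf hc (ty i) (v i)) θ := by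
  induction θ with
  | eq i j h =>
    simp only [QF.eval]
    rw [cast_Hmap N r a rmax X hInf hc h (v i)]
    exact ((hinj (ty j)).eq_iff).symm
  | mem i j h =>
    simp only [QF.eval]
    rw [cast_Hmap N r a rmax X hInf hc h (v j)]
    exact (hmem (ty i) (v i) (cast (congrArg (IterP X) h) (v j))).symm
  | not φ ih => simp only [QF.eval]; rw [ih]
  | and φ ψ ih₁ ih₂ => simp only [QF.eval]; rw [ih₁, ih₂]
  | or φ ψ ih₁ ih₂ => simp only [QF.eval]; rw [ih₁, ih₂]

end

end Stmt14
/-- `∃*∀*` sentences have the finitely generated model property: if an `∃*∀*` sentence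
with existential types `r₁ ≤ ⋯ ≤ r_k ≤ rmax` holds in a model `N` of TSTI, then it
holds in the finitely generated model of TST on at least `G_k(rmax)` atoms. -/

theorem stmt14 (N : TSTModel) (hInf : Infinite (N.D 0))
    (k l : ℕ) (ty : Fin (k + l) → ℕ) (θ : QF (k + l) ty)
    (hmono : Monotone fun i : Fin k => ty (Fin.castAdd l i))
    (rmax : ℕ) (hr : ∀ i : Fin k, ty (Fin.castAdd l i) ≤ rmax)
    (hN : SatEA N k l ty θ)
    (X : Type) [Fintype X] (hcard : Gk k rmax ≤ Fintype.card X) :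
    SatEA (fgModel X) k l ty θ := by
  classical
  open Stmt14 in
  obtain ⟨a, ha⟩ := hN
  set r : Fin k → ℕ := fun i => ty (Fin.castAdd l i) with hrdef
  have hc : (Tset N r a rmax 0).card ≤ Fintype.card X := by
    refine le_trans (Tset_card N r a rmax 0) ?_
    simpa using hcard
  have spec := Hmap_spec N r a rmax X hInf hc hr
  have hinj : ∀ n, Function.Injective (Hmap N r a rmax X hInf hc n) := fun n => (spec n).1
  have hcov : ∀ n, ↑(Tset N r a rmax n) ⊆ Set.range (Hmap N r a rmax X hInf hc n) :=
    fun n => (spec n).2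
  have hmem : ∀ n (u : IterP X n) (S : IterP X (n + 1)),
      N.mem n (Hmap N r a rmax X hInf hc n u) (Hmap N r a rmax X hInf hc (n + 1) S) ↔
        u ∈ asSet S := fun n u S => Hmap_trace N r a rmax X hInf hc n (hinj n) S u
  -- pull back the witnesses
  have hwit : ∀ i : Fin k, ∃ x : IterP X (ty (Fin.castAdd l i)),
      Hmap N r a rmax X hInf hc (ty (Fin.castAdd l i)) x = a i := fun i =>
    hcov (r i) (Finset.mem_coe.2 (Wit_subset_Tset N r a rmax (r i) (mem_Wit N r a i)))
  refine ⟨fun i => (hwit i).choose, ?_⟩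
  intro b
  have key : (fun i => Hmap N r a rmax X hInf hc (ty i)
        (Fin.addCases (fun i => (hwit i).choose) b i)) =
      Fin.addCases a (fun j => Hmap N r a rmax X hInf hc (ty (Fin.natAdd k j)) (b j)) := by
    funext i
    refine Fin.addCases (motive := fun i => Hmap N r a rmax X hInf hc (ty i)
        (Fin.addCases (fun i => (hwit i).choose) b i) =
      Fin.addCases a (fun j => Hmap N r a rmax X hInf hc (ty (Fin.natAdd k j)) (b j)) i)
      (fun i => ?_) (fun j => ?_) i
    · have e1 := Fin.addCases_left (motive := fun i => IterP X (ty i))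
        (left := fun i => (hwit i).choose) (right := b) i
      have e2 := Fin.addCases_left (motive := fun i => N.D (ty i)) (left := a)
        (right := fun j => Hmap N r a rmax X hInf hc (ty (Fin.natAdd k j)) (b j)) i
      exact (congrArg (Hmap N r a rmax X hInf hc (ty (Fin.castAdd l i))) e1).trans
        ((hwit i).choose_spec.trans e2.symm)
    · have e1 := Fin.addCases_right (motive := fun i => IterP X (ty i))
        (left := fun i => (hwit i).choose) (right := b) j
      have e2 := Fin.addCases_right (motive := fun i => N.D (ty i)) (left := a)
        (right := fun j => Hmap N r a rmax X hInf hc (ty (Fin.natAdd k j)) (b j)) j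
      exact (congrArg (Hmap N r a rmax X hInf hc (ty (Fin.natAdd k j))) e1).trans e2.symm
  refine (eval_transfer N r a rmax X hInf hc hinj hmem θ _).2 ?_
  have := ha (fun j => Hmap N r a rmax X hInf hc (ty (Fin.natAdd k j)) (b j))
  rw [← key] at this
  exact this
end

section
/- Let f : X → C and g : Y → C be J-similar colourings into a finite colour set C with J ≥ 1, let θ(z) be a propositional (quantifier-free) condition depending only on the colour of z, and suppose l < J. If there exist e₁, ..., e_l ∈ Y (not necessarily distinct) satisfying a conjunction of colour conditions and equality/inequality constraints among themselves, then there exist d₁, ..., d_l ∈ X with the same colours (f(d_i) = g(e_i)) and the same equality pattern (d_i = d_j iff e_i = e_j). -/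
/-- Transfer step: if `f` and `g` are `J`-similar with `1 ≤ J` and `l < J`, then for any
`l` elements of `Y` (not necessarily distinct) there are `l` elements of `X` with
matching colours and the same pattern of equalities. -/
theorem stmt17 {X Y C : Type*} [Finite C] (f : X → C) (g : Y → C) (J l : ℕ)
    (hJ : 1 ≤ J) (hsim : JSimilar f g J) (hl : l < J) (e : Fin l → Y) :
    ∃ d : Fin l → X, (∀ i, f (d i) = g (e i)) ∧
      ∀ i j, d i = d j ↔ e i = e j := by
  classical
  rcases Nat.eq_zero_or_pos l with rfl | hl0
  · exact ⟨Fin.elim0, fun i => i.elim0, fun i => i.elim0⟩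
  -- X is nonempty
  have i0 : Fin l := ⟨0, hl0⟩
  have hXne : Nonempty X := by
    by_contra h
    have hfib : (f ⁻¹' {g (e i0)}) = ∅ := by
      ext x; exact absurd ⟨x⟩ h
    have h0 : IsSpecial f (g (e i0)) 0 := by
      rw [IsSpecial, hfib]; simp
    have h0' : IsSpecial g (g (e i0)) 0 := (hsim 0 (lt_of_lt_of_le Nat.zero_lt_one hJ) _).1 h0
    have hmem : e i0 ∈ g ⁻¹' {g (e i0)} := rfl
    have hempty : (g ⁻¹' {g (e i0)}) = ∅ := (Set.ncard_eq_zero h0'.1).1 h0'.2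
    rw [hempty] at hmem; exact Set.notMem_empty _ hmem
  -- for each colour α, the relevant set injects into the f-fibre
  have key : ∀ α : C, ∃ φ : Y → X,
      (Set.range e ∩ g ⁻¹' {α}) ⊆ φ ⁻¹' (f ⁻¹' {α}) ∧
      Set.InjOn φ (Set.range e ∩ g ⁻¹' {α}) := by
    intro α
    have hsfin : (Set.range e ∩ g ⁻¹' {α}).Finite :=
      (Set.finite_range e).inter_of_left _
    apply hsfin.exists_injOn_of_encard_le
    -- encard bound
    have hsle : (Set.range e ∩ g ⁻¹' {α}).encard ≤ l := by
      calc (Set.range e ∩ g ⁻¹' {α}).encard ≤ (Set.range e).encard :=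
            Set.encard_le_encard Set.inter_subset_left
        _ ≤ (l : ℕ∞) := by
            have h1 := Set.encard_image_le e Set.univ
            rw [Set.image_univ] at h1
            refine h1.trans ?_
            rw [Set.encard_univ, ENat.card_eq_coe_natCard]
            simp
    by_cases hfin : (f ⁻¹' {α}).Finite
    · set k := (f ⁻¹' {α}).ncard with hk
      by_cases hkJ : k < J
      · -- α is k-special for f, hence for g
        have hgspec : IsSpecial g α k := (hsim k hkJ α).1 ⟨hfin, rfl⟩
        calc (Set.range e ∩ g ⁻¹' {α}).encard ≤ (g ⁻¹' {α}).encard :=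
              Set.encard_le_encard Set.inter_subset_right
          _ = (f ⁻¹' {α}).encard := by
              rw [← hgspec.1.cast_ncard_eq, ← hfin.cast_ncard_eq, hgspec.2]
      · -- fibre is big
        have : (l : ℕ∞) ≤ (f ⁻¹' {α}).encard := by
          rw [← hfin.cast_ncard_eq]
          exact_mod_cast le_trans (le_of_lt hl) (not_lt.1 hkJ)
        exact hsle.trans this
    · rw [Set.Infinite.encard_eq hfin]; exact le_top
  choose φ hφmem hφinj using key
  -- glue
  set H : Y → X := fun y => φ (g y) y with hH
  have hcol : ∀ y ∈ Set.range e, f (H y) = g y := by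
    intro y hy
    have : y ∈ Set.range e ∩ g ⁻¹' {g y} := ⟨hy, rfl⟩
    exact hφmem (g y) this
  have hinj : Set.InjOn H (Set.range e) := by
    intro y hy y' hy' hyy'
    have hg : g y = g y' := by
      rw [← hcol y hy, ← hcol y' hy', hyy']
    apply hφinj (g y) ⟨hy, rfl⟩ ⟨hy', by simp [hg]⟩
    simpa [hH, hg] using hyy'
  refine ⟨fun i => H (e i), fun i => hcol _ ⟨i, rfl⟩, fun i j => ⟨fun h => ?_, fun h => by simp only [h]⟩⟩
  exact hinj ⟨i, rfl⟩ ⟨j, rfl⟩ h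
end
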